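/- Let A be a unital C*-algebra and let (A_β)_{β<α} be a chain of C*-subalgebras indexed by a limit ordinal α, with A_β ⊆ A_γ for β ≤ γ. Let A_α be the closure of the union ⋃_{β<α} A_β, and suppose f is a state on A_α whose restriction to each A_β is a pure state. Then f is a pure state on A_α. -/

import Mathlib

open scoped ComplexOrder InnerProductSpace

variable {A : Type*} [NormedRing A] [StarRing A] [CStarRing A] [NormedAlgebra ℂ A]
  [StarModule ℂ A] [CompleteSpace A]

/-- A state on a unital C*-algebra, viewed through a (unital) star subalgebra `S`:
a linear functional on `S`, positive on `S`, sending `1` to `1` (equivalently, of norm 1).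
We represent it as an ambient function `A → ℂ`, constrained only on `S`. -/
def IsStateOn (S : StarSubalgebra ℂ A) (f : A → ℂ) : Prop :=
  (∀ x ∈ S, ∀ y ∈ S, f (x + y) = f x + f y) ∧
  (∀ (c : ℂ), ∀ x ∈ S, f (c • x) = c * f x) ∧
  (∀ x ∈ S, 0 ≤ f (star x * x)) ∧
  f 1 = 1

/-- A state is pure if it is an extreme point of the state space. -/
def IsPureStateOn (S : StarSubalgebra ℂ A) (f : A → ℂ) : Prop :=
  IsStateOn S f ∧ ∀ g₁ g₂ : A → ℂ, IsStateOn S g₁ → IsStateOn S g₂ →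
    (∀ x ∈ S, f x = (g₁ x + g₂ x) / 2) → ∀ x ∈ S, g₁ x = g₂ x

/-- A maximal abelian self-adjoint subalgebra. -/
def IsMasa (M : StarSubalgebra ℂ A) : Prop :=
  (∀ x ∈ M, ∀ y ∈ M, x * y = y * x) ∧
  ∀ N : StarSubalgebra ℂ A, (∀ x ∈ N, ∀ y ∈ N, x * y = y * x) → M ≤ N → N = M

/-- A projection: a self-adjoint idempotent. -/
def IsProjection (p : A) : Prop := star p = p ∧ p * p = p

lemma exists_sqrt_in (S : StarSubalgebra ℂ A) (hS : IsClosed (S : Set A))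
    [Nontrivial A] {a : A} (ha : a ∈ S) (hsa : IsSelfAdjoint a) :
    ∃ z ∈ S, star z * z = algebraMap ℂ A (‖a‖ : ℂ) - a := by
  letI : CStarAlgebra A := ⟨⟩
  have hna : IsStarNormal a := hsa.isStarNormal
  set f : ℂ → ℂ := fun w => ((Real.sqrt (‖a‖ - w.re) : ℝ) : ℂ) with hfdef
  have hcont : Continuous f := by fun_prop
  have hmem : cfc f a ∈ S := by
    rw [cfc_apply f a hna hcont.continuousOn, cfcHom_eq_of_isStarNormal]
    exact StarAlgebra.elemental.le_of_mem hS ha (SetLike.coe_mem _)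
  refine ⟨cfc f a, hmem, ?_⟩
  have hstar : star (cfc f a) = cfc f a := by
    have h1 : (fun w => star (f w)) = f := by
      funext w
      simp [hfdef, Complex.star_def, Complex.conj_ofReal]
    rw [← cfc_star f a, h1]
  rw [hstar, ← cfc_mul f f a hcont.continuousOn hcont.continuousOn]
  have key : (spectrum ℂ a).EqOn (fun w => f w * f w) (fun w => ((‖a‖ : ℂ) - w)) := by
    intro w hw
    have hre : ((w.re : ℝ) : ℂ) = w := hsa.spectrumRestricts.rightInvOn hw
    have hle : ‖w‖ ≤ ‖a‖ := spectrum.norm_le_norm_of_mem hw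
    have h0 : 0 ≤ ‖a‖ - w.re := by
      have h2 : w.re ≤ ‖w‖ := Complex.re_le_norm w
      linarith
    simp only [hfdef]
    rw [← Complex.ofReal_mul, Real.mul_self_sqrt h0]
    push_cast
    rw [hre]
  rw [cfc_congr key]
  rw [cfc_sub (fun _ => ((‖a‖ : ℂ))) (fun w => w) a continuousOn_const (continuous_id.continuousOn)]
  rw [cfc_const (‖a‖ : ℂ) a hna, cfc_id' ℂ a hna]


lemma IsStateOn.norm_apply_le (S : StarSubalgebra ℂ A) (hS : IsClosed (S : Set A))
    (g : A → ℂ) (hg : IsStateOn S g) : ∀ x ∈ S, ‖g x‖ ≤ ‖x‖ := by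
  obtain ⟨hadd, hsmul, hpos, hone⟩ := hg
  have hnt : Nontrivial A := by
    by_contra h
    rw [not_nontrivial_iff_subsingleton] at h
    have h01 : (1 : A) = 0 := Subsingleton.elim _ _
    have h0 : g ((0 : ℂ) • (1 : A)) = 0 * g 1 := hsmul 0 1 (one_mem S)
    rw [zero_smul, zero_mul, ← h01, hone] at h0
    exact one_ne_zero h0
  intro x hx
  have hxs : star x ∈ S := star_mem hx
  have hxx : star x * x ∈ S := mul_mem hxs hx
  set u := g x with hu
  set v := g (star x) with hv
  set w0 := g (star x * x) with hw0def
  -- expansion of positivity at x + t • 1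
  have hP : ∀ t : ℂ, 0 ≤ w0 + (t * v + (star t * u + star t * t)) := by
    intro t
    have m1 : t • star x ∈ S := SMulMemClass.smul_mem t hxs
    have m2 : (star t) • x ∈ S := SMulMemClass.smul_mem _ hx
    have m3 : (star t * t) • (1 : A) ∈ S := SMulMemClass.smul_mem _ (one_mem S)
    have helt : star (x + t • 1) * (x + t • 1)
        = star x * x + (t • star x + ((star t) • x + (star t * t) • (1:A))) := by
      simp only [star_add, star_smul, star_one, add_mul, mul_add, smul_mul_assoc,
        mul_smul_comm, smul_smul, mul_one, one_mul]
      module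
    have hmemt : x + t • (1 : A) ∈ S := add_mem hx (SMulMemClass.smul_mem t (one_mem S))
    have := hpos _ hmemt
    rw [helt, hadd _ hxx _ (add_mem m1 (add_mem m2 m3)), hadd _ m1 _ (add_mem m2 m3),
      hadd _ m2 _ m3, hsmul t _ hxs, hsmul (star t) _ hx, hsmul (star t * t) _ (one_mem S),
      hone, mul_one] at this
    exact this
  have hw0 : 0 ≤ w0 := hpos x hx
  have hw0im : w0.im = 0 := by
    have := (Complex.le_def.mp hw0).2; simpa using this.symm
  -- g (star x) = conj (g x)
  have him : v.im = -u.im := by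
    have h1 := (Complex.le_def.mp (hP 1)).2
    simp only [Complex.add_im, Complex.mul_im, Complex.one_re, Complex.one_im, star_one,
      Complex.zero_im, hw0im] at h1
    linarith [h1]
  have hre : v.re = u.re := by
    have h1 := (Complex.le_def.mp (hP Complex.I)).2
    simp only [Complex.star_def, Complex.conj_I, Complex.add_im, Complex.mul_im,
      Complex.I_re, Complex.I_im, Complex.neg_re, Complex.neg_im, Complex.zero_im,
      hw0im] at h1
    nlinarith [h1]
  have hvc : v = starRingEnd ℂ u := by
    apply Complex.ext <;> simp [hre, him]
  -- Cauchy-Schwarz: ‖u‖^2 ≤ w0.re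
  have hcs : ‖u‖ * ‖u‖ ≤ w0.re := by
    have h1 := (Complex.le_def.mp (hP (-u))).1
    rw [hvc] at h1
    have hexp : -u * starRingEnd ℂ u + (star (-u) * u + star (-u) * -u)
        = -((‖u‖ : ℂ) * ‖u‖) := by
      have hmc : u * starRingEnd ℂ u = ((‖u‖ : ℝ) : ℂ) * ((‖u‖ : ℝ) : ℂ) := by
        rw [Complex.mul_conj, Complex.normSq_eq_norm_sq]
        push_cast; ring
      simp only [Complex.star_def, map_neg]
      linear_combination -hmc
    rw [hexp] at h1
    simpa using h1
  -- w0.re ≤ ‖x‖ * ‖x‖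
  have hsa : IsSelfAdjoint (star x * x) := IsSelfAdjoint.star_mul_self x
  obtain ⟨z, hzS, hz⟩ := exists_sqrt_in S hS hxx hsa
  have hzpos := hpos z hzS
  rw [hz] at hzpos
  have hgdiff : g (algebraMap ℂ A ((‖star x * x‖ : ℝ) : ℂ) - star x * x)
      = ((‖star x * x‖ : ℝ) : ℂ) - w0 := by
    have hrw : algebraMap ℂ A ((‖star x * x‖ : ℝ) : ℂ) - star x * x
        = ((‖star x * x‖ : ℝ) : ℂ) • (1 : A) + (-1 : ℂ) • (star x * x) := by
      rw [Algebra.algebraMap_eq_smul_one]; module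
    rw [hrw, hadd _ (SMulMemClass.smul_mem _ (one_mem S)) _ (SMulMemClass.smul_mem _ hxx),
      hsmul _ _ (one_mem S), hsmul _ _ hxx, hone, mul_one]
    ring
  rw [hgdiff] at hzpos
  have hw0re : w0.re ≤ ‖star x * x‖ := by
    have := (Complex.le_def.mp hzpos).1
    simpa using this
  have hnorm : ‖star x * x‖ = ‖x‖ * ‖x‖ := CStarRing.norm_star_mul_self
  nlinarith [norm_nonneg u, norm_nonneg x, hcs, hw0re, hnorm ▸ hw0re]

/-- A state on the closure of the union of a chain of C*-subalgebras indexed by a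
limit ordinal, whose restriction to each member of the chain is pure, is itself pure. -/
theorem pure_of_pure_on_chain {A : Type*} [NormedRing A] [StarRing A] [CStarRing A]
    [NormedAlgebra ℂ A] [StarModule ℂ A] [CompleteSpace A]
    (α : Ordinal) (hα : Order.IsSuccLimit α) (Achain : Ordinal → StarSubalgebra ℂ A)
    (hclosed : ∀ β < α, IsClosed ((Achain β : Set A)))
    (hmono : ∀ β γ : Ordinal, β ≤ γ → γ < α → Achain β ≤ Achain γ)
    (Aα : StarSubalgebra ℂ A)
    (hAα : (Aα : Set A) = closure (⋃ β < α, (Achain β : Set A)))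
    (f : A → ℂ) (hf : IsStateOn Aα f)
    (hpure : ∀ β < α, IsPureStateOn (Achain β) f) :
    IsPureStateOn Aα f := by
  classical
  have hsubU : (⋃ β < α, (Achain β : Set A)) ⊆ (Aα : Set A) := by
    rw [hAα]; exact subset_closure
  have hsubβ : ∀ β < α, (Achain β : Set A) ⊆ (Aα : Set A) := fun β hβ y hy =>
    hsubU (Set.mem_biUnion hβ hy)
  have hAcl : IsClosed ((Aα : Set A)) := by rw [hAα]; exact isClosed_closure
  refine ⟨hf, ?_⟩
  intro g₁ g₂ hg₁ hg₂ havg x hx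
  -- restriction of a state on Aα to Achain β
  have hrestrict : ∀ (g : A → ℂ), IsStateOn Aα g → ∀ β < α, IsStateOn (Achain β) g := by
    intro g hg β hβ
    obtain ⟨ha, hs, hp, ho⟩ := hg
    exact ⟨fun x hx y hy => ha x (hsubβ β hβ hx) y (hsubβ β hβ hy),
      fun c x hx => hs c x (hsubβ β hβ hx),
      fun x hx => hp x (hsubβ β hβ hx), ho⟩
  -- g₁ = g₂ on the union
  have hU : ∀ y ∈ ⋃ β < α, (Achain β : Set A), g₁ y = g₂ y := by
    intro y hy
    obtain ⟨β, hβ, hyβ⟩ := Set.mem_iUnion₂.mp hy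
    exact (hpure β hβ).2 g₁ g₂ (hrestrict g₁ hg₁ β hβ) (hrestrict g₂ hg₂ β hβ)
      (fun w hw => havg w (hsubβ β hβ hw)) y hyβ
  -- subtraction rule for states
  have hsub : ∀ (g : A → ℂ), IsStateOn Aα g → ∀ p ∈ Aα, ∀ q ∈ Aα,
      g (p - q) = g p - g q := by
    intro g hg p hp q hq
    obtain ⟨ha, hs, _, _⟩ := hg
    have h1 : p - q = p + (-1 : ℂ) • q := by module
    rw [h1, ha p hp _ (SMulMemClass.smul_mem _ hq), hs (-1) q hq]
    ring
  have hb₁ := IsStateOn.norm_apply_le Aα hAcl g₁ hg₁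
  have hb₂ := IsStateOn.norm_apply_le Aα hAcl g₂ hg₂
  by_contra hne
  have hd : 0 < ‖g₁ x - g₂ x‖ := by
    rw [norm_pos_iff]
    exact sub_ne_zero.mpr hne
  have hxc : x ∈ closure (⋃ β < α, (Achain β : Set A)) := by
    rw [← hAα]; exact hx
  obtain ⟨y, hyU, hxy⟩ := Metric.mem_closure_iff.mp hxc (‖g₁ x - g₂ x‖ / 4)
    (by linarith)
  have hyAα : y ∈ Aα := hsubU hyU
  have hgy : g₁ y = g₂ y := hU y hyU
  have key : ‖g₁ x - g₂ x‖ ≤ 2 * dist x y := by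
    have h1 : g₁ x - g₂ x = g₁ (x - y) + (g₂ (y - x)) := by
      rw [hsub g₁ hg₁ x hx y hyAα, hsub g₂ hg₂ y hyAα x hx, hgy]; ring
    rw [h1]
    calc ‖g₁ (x - y) + g₂ (y - x)‖ ≤ ‖g₁ (x - y)‖ + ‖g₂ (y - x)‖ := norm_add_le _ _
      _ ≤ ‖x - y‖ + ‖y - x‖ :=
        add_le_add (hb₁ _ (sub_mem hx hyAα)) (hb₂ _ (sub_mem hyAα hx))
      _ = 2 * dist x y := by rw [dist_eq_norm, norm_sub_rev y x]; ring
  linarith [key, hxy]
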